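/- (Correctness of greedy deletion.) Let Suff : Finset (Fin n) → Prop be monotone (S ⊆ T and Suff S imply Suff T) with Suff Finset.univ. Define the greedy procedure that starts with X = Finset.univ and, iterating over features i = 0, …, n−1 in order, removes i from X whenever Suff (X \ {i}) holds. Then the resulting set X satisfies Suff X, and X is minimal in the sense that for every i ∈ X, Suff (X \ {i}) fails. -/

import Mathlib

open Classical in
noncomputable def greedyDelete {n : ℕ} (Suff : Finset (Fin n) → Prop) : Finset (Fin n) :=
  (List.finRange n).foldl
    (fun X i => if Suff (X \ {i}) then X \ {i} else X) Finset.univ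

open Classical in
theorem greedyDelete_correct {n : ℕ} (Suff : Finset (Fin n) → Prop)
    (hmono : ∀ S T : Finset (Fin n), S ⊆ T → Suff S → Suff T)
    (huniv : Suff Finset.univ) :
    Suff (greedyDelete Suff) ∧
    ∀ i ∈ greedyDelete Suff, ¬ Suff (greedyDelete Suff \ {i}) := by
  classical
  suffices h : ∀ (l : List (Fin n)) (X : Finset (Fin n)), Suff X →
      (∀ i ∈ X, i ∉ l → ¬ Suff (X \ {i})) →
      Suff (l.foldl (fun X i => if Suff (X \ {i}) then X \ {i} else X) X) ∧
      ∀ i ∈ l.foldl (fun X i => if Suff (X \ {i}) then X \ {i} else X) X,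
        ¬ Suff ((l.foldl (fun X i => if Suff (X \ {i}) then X \ {i} else X) X) \ {i}) by
    have := h (List.finRange n) Finset.univ huniv
      (fun i _ hi => absurd (List.mem_finRange i) hi)
    exact ⟨this.1, this.2⟩
  intro l
  induction l with
  | nil =>
    intro X hX hmin
    exact ⟨hX, fun i hi => hmin i hi List.not_mem_nil⟩
  | cons a rest ih =>
    intro X hX hmin
    simp only [List.foldl_cons]
    by_cases ha : Suff (X \ {a})
    · rw [if_pos ha]
      refine ih _ ha ?_
      intro j hj hjr
      have hsub : (X \ {a}) \ {j} ⊆ X \ {j} :=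
        Finset.sdiff_subset_sdiff Finset.sdiff_subset (le_refl _)
      have hja : j ≠ a := by
        intro h; subst h; simp at hj
      have : j ∉ a :: rest := by
        simp [hja, hjr]
      exact fun hs => hmin j (Finset.mem_sdiff.mp hj).1 this (hmono _ _ hsub hs)
    · rw [if_neg ha]
      refine ih _ hX ?_
      intro j hj hjr
      by_cases hja : j = a
      · subst hja; exact ha
      · exact hmin j hj (by simp [hja, hjr])
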